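/- Let n and h be positive integers, and let v_1(n,h) = max over d | n of (⌊(d−2)/h⌋ + 1)·(n/d). Then u(n, v_1(n,h), h) < n, where u(n,m,h) = min over d | n of (h⌈m/d⌉ − h + 1)·d. In particular there is a divisor d₀ of n with (h⌊(d₀−2)/h⌋ + 1)·(n/d₀) ≤ n − n/d₀ < n. -/
import Mathlib


/-- The function `v_g(n,h)`: the maximum over positive divisors `d` of `n` of
`(⌊(d - 1 - gcd(d,g))/h⌋ + 1) * (n/d)`. -/
def vFun (g n h : ℕ) : ℤ :=
  (insert 1 n.divisors).sup' (Finset.insert_nonempty _ _) fun d =>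
    (((d : ℤ) - 1 - (Nat.gcd d g : ℤ)) / (h : ℤ) + 1) * ((n : ℤ) / (d : ℤ))

theorem stmt16 (n h : ℕ) (hn : 0 < n) (hh : 0 < h) (m : ℤ) (hm : m = vFun 1 n h) :
    (n.divisors.inf' (Nat.nonempty_divisors.mpr hn.ne')
        (fun d => ((h : ℤ) * ⌈(m : ℚ) / (d : ℚ)⌉ - (h : ℤ) + 1) * (d : ℤ))) < (n : ℤ) ∧
    ∃ d₀ ∈ n.divisors,
      ((h : ℤ) * (((d₀ : ℤ) - 2) / (h : ℤ)) + 1) * ((n : ℤ) / (d₀ : ℤ))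
        ≤ (n : ℤ) - (n : ℤ) / (d₀ : ℤ) := by
  have h1 : (1:ℕ) ∈ n.divisors := Nat.one_mem_divisors.mpr hn.ne'
  have hins : insert 1 n.divisors = n.divisors := Finset.insert_eq_self.mpr h1
  obtain ⟨d₀, hd₀mem, hd₀⟩ := Finset.exists_mem_eq_sup' (Finset.insert_nonempty 1 n.divisors)
    (fun d => (((d : ℤ) - 1 - (Nat.gcd d 1 : ℤ)) / (h : ℤ) + 1) * ((n : ℤ) / (d : ℤ)))
  rw [hins] at hd₀mem
  obtain ⟨hdvd, -⟩ := Nat.mem_divisors.mp hd₀mem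
  obtain ⟨k, hk⟩ := hdvd
  have hd₀pos : 0 < d₀ := Nat.pos_of_mem_divisors hd₀mem
  have hkpos : 0 < k := by
    rcases Nat.eq_zero_or_pos k with h0 | h0
    · subst h0; simp [hk] at hn
    · exact h0
  have hkmem : k ∈ n.divisors := Nat.mem_divisors.mpr ⟨Dvd.intro_left d₀ hk.symm, hn.ne'⟩
  set q : ℤ := ((d₀:ℤ) - 2) / (h:ℤ) with hq
  set r : ℤ := ((d₀:ℤ) - 2) % (h:ℤ) with hr
  have hhz : (0:ℤ) < (h:ℤ) := by exact_mod_cast hh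
  have hrnn : 0 ≤ r := Int.emod_nonneg _ hhz.ne'
  have hdecomp : (h:ℤ) * q + r = (d₀:ℤ) - 2 := Int.mul_ediv_add_emod _ _
  have hnz : (n:ℤ) = (d₀:ℤ) * (k:ℤ) := by exact_mod_cast hk
  have hdiv : (n:ℤ) / (d₀:ℤ) = (k:ℤ) := by
    rw [hnz]; exact Int.mul_ediv_cancel_left _ (by exact_mod_cast hd₀pos.ne')
  have hm' : m = (q + 1) * (k:ℤ) := by
    rw [hm, vFun, hd₀, hdiv, Nat.gcd_one_right]
    push_cast
    have h2 : (d₀:ℤ) - 1 - 1 = (d₀:ℤ) - 2 := by ring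
    rw [h2, hq]
  have hkQ : ((k:ℤ):ℚ) ≠ 0 := by exact_mod_cast hkpos.ne'
  have hceil : ⌈(m : ℚ) / ((k:ℕ) : ℚ)⌉ = q + 1 := by
    have heq : (m:ℚ) / ((k:ℕ) : ℚ) = ((q + 1 : ℤ) : ℚ) := by
      have hk0 : ((k:ℕ):ℚ) ≠ 0 := by exact_mod_cast hkpos.ne'
      rw [hm']; push_cast; field_simp
    rw [heq, Int.ceil_intCast]
  constructor
  · refine lt_of_le_of_lt (Finset.inf'_le _ hkmem) ?_
    simp only [hceil]
    have hkey : (h:ℤ) * (q + 1) - (h:ℤ) + 1 = (d₀:ℤ) - 1 - r := by linarith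
    rw [hkey, hnz]
    have hd2 : (1:ℤ) ≤ (d₀:ℤ) := by exact_mod_cast hd₀pos
    have hk1 : (1:ℤ) ≤ (k:ℤ) := by exact_mod_cast hkpos
    nlinarith
  · refine ⟨d₀, hd₀mem, ?_⟩
    rw [hdiv, hnz]
    have hk1 : (0:ℤ) ≤ (k:ℤ) := by positivity
    nlinarith
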